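/- Let R be an almost Dedekind domain and I a nonzero fractional ideal of R. Then the support of ν_I in Max(R) (with the inverse topology) is compact. -/

import Mathlib

open nonZeroDivisors Topology

def AlmostDedekind (R : Type*) [CommRing R] [IsDomain R] : Prop :=
  ∀ M : MaximalSpectrum R, IsDiscreteValuationRing (Localization.AtPrime M.asIdeal)

/-- The inverse topology on the maximal spectrum. -/
def invTop (R : Type*) [CommRing R] : TopologicalSpace (MaximalSpectrum R) :=
  .generateFrom {s | ∃ I : Ideal R, I.FG ∧ s = {M | I ≤ M.asIdeal}}

/-- Let `R` be an almost Dedekind domain with fraction field `K`, `v M` the valuation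
of the DVR `R_M`, `I` a nonzero fractional ideal and `ν M` the minimum of `v M` on the
nonzero elements of `I`.  Then the support of `ν` (closure, in the inverse topology on
`Max(R)`, of the set where `ν` is nonzero) is compact. -/
theorem stmt8 {R : Type*} [CommRing R] [IsDomain R] (hR : AlmostDedekind R)
    (K : Type*) [Field K] [Algebra R K] [IsFractionRing R K]
    (v : MaximalSpectrum R → K → ℤ)
    (hv_mul : ∀ M : MaximalSpectrum R, ∀ x y : K, x ≠ 0 → y ≠ 0 →
      v M (x * y) = v M x + v M y)
    (hv_int : ∀ M : MaximalSpectrum R, ∀ x : R, x ≠ 0 →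
      ∀ n : ℕ, ((n : ℤ) ≤ v M (algebraMap R K x) ↔ x ∈ M.asIdeal ^ n))
    (I : FractionalIdeal R⁰ K) (hI : I ≠ 0)
    (ν : MaximalSpectrum R → ℤ)
    (hν : ∀ M : MaximalSpectrum R, IsLeast (v M '' {x : K | x ∈ I ∧ x ≠ 0}) (ν M)) :
    @IsCompact _ (invTop R) (@closure _ (invTop R) {M : MaximalSpectrum R | ν M ≠ 0}) := by
  letI : TopologicalSpace (MaximalSpectrum R) := invTop R
  have halg : Function.Injective (algebraMap R K) := IsFractionRing.injective R K
  -- choose a denominator `d` and a nonzero element `x ∈ I`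
  obtain ⟨d, hd, hdI⟩ := I.isFractional
  have hd0 : d ≠ 0 := nonZeroDivisors.ne_zero hd
  have hda : algebraMap R K d ≠ 0 := fun h => hd0 (halg (by simpa using h))
  obtain ⟨x, hxI, hx0⟩ : ∃ x, x ∈ I ∧ x ≠ 0 := by
    by_contra h
    push_neg at h
    apply hI
    ext y
    simp only [FractionalIdeal.mem_zero_iff]
    exact ⟨fun hy => h y hy, fun hy => by rw [hy]; exact (I : Submodule R K).zero_mem⟩
  obtain ⟨n, hn⟩ := hdI x hxI
  have hn' : algebraMap R K n = algebraMap R K d * x := by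
    rw [hn, Algebra.smul_def]
  have hn0 : n ≠ 0 := by
    intro h
    apply mul_ne_zero hda hx0
    rw [← hn', h, map_zero]
  set b : R := d * n with hb
  have hb0 : b ≠ 0 := mul_ne_zero hd0 hn0
  -- values of `v` on elements of `R`
  have hvnonneg : ∀ M : MaximalSpectrum R, ∀ r : R, r ≠ 0 →
      (0 : ℤ) ≤ v M (algebraMap R K r) := by
    intro M r hr
    have := (hv_int M r hr 0).mpr (by simp)
    simpa using this
  have hv0 : ∀ M : MaximalSpectrum R, ∀ r : R, r ≠ 0 → r ∉ M.asIdeal →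
      v M (algebraMap R K r) = 0 := by
    intro M r hr hrM
    have h0 := hvnonneg M r hr
    have h1 : ¬ ((1 : ℤ) ≤ v M (algebraMap R K r)) := by
      intro h
      exact hrM (by simpa using (hv_int M r hr 1).mp (by simpa using h))
    omega
  -- the support of ν is contained in V(b)
  have hsub : {M : MaximalSpectrum R | ν M ≠ 0} ⊆ {M | b ∈ M.asIdeal} := by
    intro M hM
    by_contra hbM
    have hdM : d ∉ M.asIdeal := fun h => hbM (Ideal.mul_mem_right _ _ h)
    have hnM : n ∉ M.asIdeal := fun h => hbM (Ideal.mul_mem_left _ _ h)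
    have hvd : v M (algebraMap R K d) = 0 := hv0 M d hd0 hdM
    have hvn : v M (algebraMap R K n) = 0 := hv0 M n hn0 hnM
    have hvx : v M x = 0 := by
      have hmul := hv_mul M (algebraMap R K d) x hda hx0
      rw [← hn'] at hmul
      omega
    have hle : ν M ≤ 0 := by
      have := (hν M).2 (Set.mem_image_of_mem _ (show x ∈ {x : K | x ∈ I ∧ x ≠ 0} from ⟨hxI, hx0⟩))
      omega
    have hge : 0 ≤ ν M := by
      obtain ⟨y, ⟨hyI, hy0⟩, hvy⟩ := (hν M).1
      obtain ⟨m, hm⟩ := hdI y hyI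
      have hm' : algebraMap R K m = algebraMap R K d * y := by rw [hm, Algebra.smul_def]
      have hm0 : m ≠ 0 := by
        intro h
        apply mul_ne_zero hda hy0
        rw [← hm', h, map_zero]
      have h1 := hvnonneg M m hm0
      have h2 := hv_mul M (algebraMap R K d) y hda hy0
      rw [← hm'] at h2
      omega
    exact hM (le_antisymm hle hge)
  -- V(r)ᶜ is open, hence V(b) is closed
  have hopen : ∀ r : R, IsOpen {M : MaximalSpectrum R | r ∉ M.asIdeal} := by
    intro r
    have heq : {M : MaximalSpectrum R | r ∉ M.asIdeal} =
        ⋃ c ∈ {c : R | (1 : R) ∈ Ideal.span {c} ⊔ Ideal.span {r}},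
          {M : MaximalSpectrum R | Ideal.span {c} ≤ M.asIdeal} := by
      ext M
      constructor
      · intro hM
        obtain ⟨y, i, hi, hyi⟩ := M.isMaximal.exists_inv hM
        refine Set.mem_biUnion (x := i) ?_ ?_
        · have h1 : i ∈ Ideal.span {i} ⊔ Ideal.span {r} :=
            Ideal.mem_sup_left (Ideal.subset_span rfl)
          have h2 : y * r ∈ Ideal.span {i} ⊔ Ideal.span {r} :=
            Ideal.mem_sup_right (Ideal.mul_mem_left _ _ (Ideal.subset_span rfl))
          have := Ideal.add_mem _ h2 h1
          rwa [hyi] at this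
        · show Ideal.span {i} ≤ M.asIdeal
          rw [Ideal.span_le, Set.singleton_subset_iff]
          exact hi
      · intro hM
        obtain ⟨c, hc, hle⟩ := Set.mem_iUnion₂.mp hM
        intro hrM
        have h1 : Ideal.span {c} ⊔ Ideal.span {r} ≤ M.asIdeal := by
          refine sup_le hle ?_
          rw [Ideal.span_le, Set.singleton_subset_iff]
          exact hrM
        exact M.isMaximal.ne_top (Ideal.eq_top_iff_one _ |>.mpr (h1 hc))
    rw [heq]
    exact isOpen_biUnion fun c _ =>
      TopologicalSpace.isOpen_generateFrom_of_mem
        ⟨Ideal.span {c}, ⟨{c}, by simp⟩, rfl⟩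
  have hVb_closed : IsClosed {M : MaximalSpectrum R | b ∈ M.asIdeal} := by
    rw [← isOpen_compl_iff]
    exact hopen b
  -- compactness via ultrafilters
  rw [isCompact_iff_ultrafilter_le_nhds]
  intro F hF
  have hSF : closure {M : MaximalSpectrum R | ν M ≠ 0} ∈ F := Filter.le_principal_iff.mp hF
  have hbF : {M : MaximalSpectrum R | b ∈ M.asIdeal} ∈ F :=
    Filter.mem_of_superset hSF (closure_minimal hsub hVb_closed)
  -- the "limit" prime ideal
  let P : Ideal R :=
    { carrier := {r : R | {M : MaximalSpectrum R | r ∈ M.asIdeal} ∈ F}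
      add_mem' := fun {a c} ha hc =>
        Filter.mem_of_superset (Filter.inter_mem ha hc)
          (fun M hM => Ideal.add_mem _ hM.1 hM.2)
      zero_mem' := Filter.univ_mem' fun M => Ideal.zero_mem _
      smul_mem' := fun c {y} hy =>
        Filter.mem_of_superset hy (fun M hM => by
          simpa [smul_eq_mul] using Ideal.mul_mem_left _ c hM) }
  have hbP : b ∈ P := hbF
  have hPprime : P.IsPrime := by
    constructor
    · intro h
      have h1 : (1 : R) ∈ P := (Ideal.eq_top_iff_one _).mp h
      have he : {M : MaximalSpectrum R | (1 : R) ∈ M.asIdeal} = ∅ := by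
        ext M
        simp only [Set.mem_setOf_eq, Set.mem_empty_iff_false, iff_false]
        exact fun hM => M.isMaximal.ne_top ((Ideal.eq_top_iff_one _).mpr hM)
      have h2 : {M : MaximalSpectrum R | (1 : R) ∈ M.asIdeal} ∈ F := h1
      rw [he] at h2
      exact Filter.empty_notMem (F : Filter (MaximalSpectrum R)) h2
    · intro a c h
      rw [or_iff_not_imp_left]
      intro ha
      have ha' : {M : MaximalSpectrum R | a ∈ M.asIdeal}ᶜ ∈ F :=
        Ultrafilter.compl_mem_iff_notMem.mpr ha
      refine Filter.mem_of_superset (Filter.inter_mem h ha') ?_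
      rintro M ⟨h1, h2⟩
      exact (M.isMaximal.isPrime.mem_or_mem h1).resolve_left h2
  have hP0 : P ≠ ⊥ := by
    intro h
    rw [h] at hbP
    exact hb0 (Ideal.mem_bot.mp hbP)
  obtain ⟨M₀, hM₀max, hPM₀⟩ := P.exists_le_maximal hPprime.ne_top
  -- P = M₀ using the DVR property of the localization
  haveI hDVR : IsDiscreteValuationRing (Localization.AtPrime M₀) := hR ⟨M₀, hM₀max⟩
  haveI : M₀.IsMaximal := hM₀max
  have hdisjP : Disjoint (↑M₀.primeCompl : Set R) ↑P := by
    rw [Set.disjoint_left]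
    intro a ha haP
    exact ha (hPM₀ haP)
  have hdisjM : Disjoint (↑M₀.primeCompl : Set R) ↑M₀ := by
    rw [Set.disjoint_left]
    intro a ha haM
    exact ha haM
  haveI hmapP : (P.map (algebraMap R (Localization.AtPrime M₀))).IsPrime :=
    IsLocalization.isPrime_of_isPrime_disjoint M₀.primeCompl _ P hPprime hdisjP
  have hmapP0 : P.map (algebraMap R (Localization.AtPrime M₀)) ≠ ⊥ := by
    intro h
    have hb' : algebraMap R (Localization.AtPrime M₀) b ∈
        P.map (algebraMap R (Localization.AtPrime M₀)) := Ideal.mem_map_of_mem _ hbP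
    rw [h, Ideal.mem_bot] at hb'
    exact hb0 (IsLocalization.injective (Localization.AtPrime M₀)
      M₀.primeCompl_le_nonZeroDivisors (by rw [hb', map_zero]))
  have hPeq : P = M₀ := by
    have h1 : P.map (algebraMap R (Localization.AtPrime M₀)) =
        M₀.map (algebraMap R (Localization.AtPrime M₀)) := by
      rw [Localization.AtPrime.map_eq_maximalIdeal]
      exact IsLocalRing.eq_maximalIdeal (IsPrime.to_maximal_ideal hmapP0)
    calc P = (P.map (algebraMap R (Localization.AtPrime M₀))).comap
            (algebraMap R (Localization.AtPrime M₀)) :=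
          (IsLocalization.comap_map_of_isPrime_disjoint _ _ hPprime hdisjP).symm
      _ = (M₀.map (algebraMap R (Localization.AtPrime M₀))).comap
            (algebraMap R (Localization.AtPrime M₀)) := by rw [h1]
      _ = M₀ := IsLocalization.comap_map_of_isPrime_disjoint _ _ hM₀max.isPrime hdisjM
  set M₀' : MaximalSpectrum R := ⟨M₀, hM₀max⟩ with hM₀'
  -- F converges to M₀'
  have key : ∀ U : Set (MaximalSpectrum R),
      TopologicalSpace.GenerateOpen
        {s | ∃ J : Ideal R, J.FG ∧ s = {M : MaximalSpectrum R | J ≤ M.asIdeal}} U →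
      M₀' ∈ U → U ∈ F := by
    intro U hU
    induction hU with
    | basic s hs =>
      intro hM
      obtain ⟨J, hJfg, rfl⟩ := hs
      obtain ⟨T, hT⟩ := hJfg
      have hmem : (⋂ t ∈ (T : Set R), {M : MaximalSpectrum R | t ∈ M.asIdeal}) ∈ F := by
        refine (Filter.biInter_mem T.finite_toSet).mpr fun t ht => ?_
        have : t ∈ P := by
          rw [hPeq]
          exact hM (hT ▸ Ideal.subset_span ht)
        exact this
      refine Filter.mem_of_superset hmem fun M hMmem => ?_
      show J ≤ M.asIdeal
      rw [← hT, Ideal.span_le]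
      intro t ht
      exact Set.mem_iInter₂.mp hMmem t ht
    | univ => exact fun _ => Filter.univ_mem
    | inter s t _ _ ihs iht =>
      rintro ⟨h1, h2⟩
      exact Filter.inter_mem (ihs h1) (iht h2)
    | sUnion S _ ih =>
      rintro ⟨s, hsS, hMs⟩
      exact Filter.mem_of_superset (ih s hsS hMs) (Set.subset_sUnion_of_mem hsS)
  have hFnhds : (F : Filter (MaximalSpectrum R)) ≤ 𝓝 M₀' := by
    rw [(nhds_basis_opens M₀').ge_iff]
    rintro U ⟨hU1, hU2⟩
    exact key U hU2 hU1
  refine ⟨M₀', ?_, hFnhds⟩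
  have hmem : M₀' ∈ closure (closure {M : MaximalSpectrum R | ν M ≠ 0}) := by
    rw [mem_closure_iff_clusterPt]
    exact .mono (ClusterPt.of_le_nhds hFnhds) hF
  rwa [closure_closure] at hmem
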